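/- Let n ≥ 2, N ≥ n, ε ∈ (0, 1/n), and x ∈ Δ^N with x(1) ≤ ε (all family sizes at most εN). Then κ^N_2(x, {{1,2}})·(1 − nε)^n ≤ κ^N_n(x, {{1,2},{3},...,{n}}) ≤ κ^N_2(x, {{1,2}}), where κ^N_n(x,·) is the urn-without-replacement partition kernel. -/

import Mathlib

open scoped Classical in
/-- Urn-without-replacement partition kernel. -/
noncomputable def urnKernel (N n : ℕ) (c : Fin N → ℕ) (P : Fin n → Fin n → Prop) : ℝ :=
  ((Finset.univ.filter fun f : Fin n ↪ Fin N =>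
      ∀ i j, P i j ↔ c (f i) = c (f j)).card : ℝ) /
    (Fintype.card (Fin n ↪ Fin N) : ℝ)

/-- the partition `{{1,2},{3},…}` relation on `Fin n`. -/
def stmtQ (n : ℕ) (i j : Fin n) : Prop := i = j ∨ ((i : ℕ) < 2 ∧ (j : ℕ) < 2)

open scoped Classical in
noncomputable def stmtS (N k : ℕ) (c : Fin N → ℕ) : Finset (Fin k ↪ Fin N) :=
  Finset.univ.filter fun f => ∀ i j, stmtQ k i j ↔ c (f i) = c (f j)

lemma stmt_card_succ (N k : ℕ) (c : Fin N → ℕ) (hk : 2 ≤ k) :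
    (stmtS N (k+1) c).card =
      ∑ g ∈ stmtS N k c,
        (Finset.univ.filter fun a : Fin N => ∀ i, c a ≠ c (g i)).card := by
  classical
  have hQcast : ∀ (i j : Fin k), stmtQ (k+1) i.castSucc j.castSucc ↔ stmtQ k i j := by
    intro i j
    simp [stmtQ, Fin.castSucc_inj]
  have hlast : ∀ j : Fin k, ¬ stmtQ (k+1) (Fin.last k) j.castSucc := by
    intro j h
    rcases h with h | h
    · have := congrArg Fin.val h
      simp only [Fin.val_last, Fin.coe_castSucc] at this
      omega
    · simp only [Fin.val_last] at h
      omega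
  have hlast' : ∀ j : Fin k, ¬ stmtQ (k+1) j.castSucc (Fin.last k) := by
    intro j h
    rcases h with h | h
    · have := congrArg Fin.val h
      simp only [Fin.val_last, Fin.coe_castSucc] at this
      omega
    · simp only [Fin.val_last] at h
      omega
  have H : ∀ f ∈ stmtS N (k+1) c, Fin.castSuccEmb.trans f ∈ stmtS N k c := by
    intro f hf
    simp only [stmtS, Finset.mem_filter, Finset.mem_univ, true_and] at hf ⊢
    intro i j
    rw [← hQcast i j]
    exact hf i.castSucc j.castSucc
  rw [Finset.card_eq_sum_card_fiberwise H]
  refine Finset.sum_congr rfl fun g hg => ?_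
  simp only [stmtS, Finset.mem_filter, Finset.mem_univ, true_and] at hg
  refine Finset.card_bij (fun f _ => f (Fin.last k)) ?_ ?_ ?_
  · intro f hf
    simp only [stmtS, Finset.mem_filter, Finset.mem_univ, true_and] at hf ⊢
    obtain ⟨hf1, hf2⟩ := hf
    intro i
    have hgi : g i = f i.castSucc := by
      rw [← hf2]; rfl
    rw [hgi]
    exact fun h => hlast i ((hf1 (Fin.last k) i.castSucc).2 h)
  · intro f₁ hf₁ f₂ hf₂ h
    simp only [stmtS, Finset.mem_filter, Finset.mem_univ, true_and] at hf₁ hf₂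
    apply Function.Embedding.ext
    intro i
    induction i using Fin.lastCases with
    | last => exact h
    | cast i =>
      have e1 : f₁ i.castSucc = g i := by rw [← hf₁.2]; rfl
      have e2 : f₂ i.castSucc = g i := by rw [← hf₂.2]; rfl
      rw [e1, e2]
  · intro b hb
    simp only [Finset.mem_filter, Finset.mem_univ, true_and] at hb
    have hFinj : Function.Injective (Fin.lastCases b ⇑g : Fin (k+1) → Fin N) := by
      intro i j h
      induction i using Fin.lastCases with
      | last =>
        induction j using Fin.lastCases with
        | last => rfl
        | cast j =>
          simp only [Fin.lastCases_last, Fin.lastCases_castSucc] at h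
          exact absurd (congrArg c h) (hb j)
      | cast i =>
        induction j using Fin.lastCases with
        | last =>
          simp only [Fin.lastCases_last, Fin.lastCases_castSucc] at h
          exact absurd (congrArg c h.symm) (hb i)
        | cast j =>
          simp only [Fin.lastCases_castSucc] at h
          rw [g.injective h]
    refine ⟨⟨Fin.lastCases b ⇑g, hFinj⟩, ?_, ?_⟩
    · simp only [stmtS, Finset.mem_filter, Finset.mem_univ, true_and]
      constructor
      · intro i j
        induction i using Fin.lastCases with
        | last =>
          induction j using Fin.lastCases with
          | last => simp [stmtQ]
          | cast j =>
            simp only [Function.Embedding.coeFn_mk, Fin.lastCases_last,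
              Fin.lastCases_castSucc]
            exact iff_of_false (hlast j) (hb j)
        | cast i =>
          induction j using Fin.lastCases with
          | last =>
            simp only [Function.Embedding.coeFn_mk, Fin.lastCases_last,
              Fin.lastCases_castSucc]
            exact iff_of_false (hlast' i) (fun h => hb i h.symm)
          | cast j =>
            simp only [Function.Embedding.coeFn_mk, Fin.lastCases_castSucc]
            rw [hQcast i j]
            exact hg i j
      · apply Function.Embedding.ext
        intro i
        show Fin.lastCases b ⇑g i.castSucc = g i
        rw [Fin.lastCases_castSucc]
    · show Fin.lastCases b ⇑g (Fin.last k) = b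
      rw [Fin.lastCases_last]

lemma stmt_fiber_le (N k : ℕ) (c : Fin N → ℕ) (g : Fin k ↪ Fin N) :
    (Finset.univ.filter fun a : Fin N => ∀ i, c a ≠ c (g i)).card ≤ N - k := by
  classical
  have hsub : (Finset.univ.filter fun a : Fin N => ∀ i, c a ≠ c (g i)) ⊆
      (Finset.univ.image g)ᶜ := by
    intro a ha
    simp only [Finset.mem_filter, Finset.mem_univ, true_and] at ha
    simp only [Finset.mem_compl, Finset.mem_image, Finset.mem_univ, true_and, not_exists]
    intro i h
    exact ha i (by rw [← h])
  calc (Finset.univ.filter fun a : Fin N => ∀ i, c a ≠ c (g i)).card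
      ≤ ((Finset.univ.image g)ᶜ).card := Finset.card_le_card hsub
    _ = N - k := by
        rw [Finset.card_compl, Finset.card_image_of_injective _ g.injective,
          Finset.card_univ, Fintype.card_fin, Fintype.card_fin]

lemma stmt_fiber_ge (N k : ℕ) (c : Fin N → ℕ) (ε : ℝ)
    (hfam : ∀ ℓ, ((Finset.univ.filter fun a : Fin N => c a = ℓ).card : ℝ) ≤ ε * N)
    (g : Fin k ↪ Fin N) :
    (N : ℝ) - k * (ε * N) ≤
      ((Finset.univ.filter fun a : Fin N => ∀ i, c a ≠ c (g i)).card : ℝ) := by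
  classical
  set s := Finset.univ.filter fun a : Fin N => ∀ i, c a ≠ c (g i) with hs
  have hcompl : sᶜ ⊆ Finset.univ.biUnion fun i : Fin k =>
      Finset.univ.filter fun a : Fin N => c a = c (g i) := by
    intro a ha
    simp only [hs, Finset.mem_compl, Finset.mem_filter, Finset.mem_univ, true_and,
      not_forall, not_not] at ha
    obtain ⟨i, hi⟩ := ha
    simp only [Finset.mem_biUnion, Finset.mem_filter, Finset.mem_univ, true_and]
    exact ⟨i, hi⟩
  have hcc : ((sᶜ).card : ℝ) ≤ k * (ε * N) := by
    calc ((sᶜ).card : ℝ) ≤ ((Finset.univ.biUnion fun i : Fin k =>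
          Finset.univ.filter fun a : Fin N => c a = c (g i)).card : ℝ) := by
          exact_mod_cast Finset.card_le_card hcompl
      _ ≤ ∑ i : Fin k, ((Finset.univ.filter fun a : Fin N => c a = c (g i)).card : ℝ) := by
          exact_mod_cast Finset.card_biUnion_le
      _ ≤ ∑ _i : Fin k, ε * N := Finset.sum_le_sum fun i _ => hfam _
      _ = k * (ε * N) := by simp [Finset.sum_const, nsmul_eq_mul, Finset.card_univ]
  have hadd : s.card + (sᶜ).card = N := by
    rw [Finset.card_add_card_compl, Fintype.card_fin]
  have : (s.card : ℝ) = N - (sᶜ).card := by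
    have := congrArg (fun m : ℕ => (m : ℝ)) hadd
    push_cast at this
    linarith
  rw [this]
  linarith

/-- Estimate (6.2): for `x ∈ Δ^N` with all family sizes at most `εN`,
`κ^N_2(x,{{1,2}})·(1 − nε)^n ≤ κ^N_n(x,{{1,2},{3},…,{n}}) ≤ κ^N_2(x,{{1,2}})`. -/
theorem stmt9 (N n : ℕ) (hn : 2 ≤ n) (hN : n ≤ N)
    (ε : ℝ) (hε : 0 < ε) (hε' : ε < 1 / n)
    (x : ℕ → ℝ)
    (hx0 : ∀ i, 0 ≤ x i) (hxa : Antitone x) (hxs : Summable x) (hx1 : ∑' i, x i = 1)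
    (hxN : ∀ i, ∃ m : ℕ, (N : ℝ) * x i = m)
    (hxε : x 0 ≤ ε)
    (c : Fin N → ℕ)
    (hc : ∀ ℓ, ((Finset.univ.filter fun a => c a = ℓ).card : ℝ) = (N : ℝ) * x ℓ) :
    urnKernel N 2 c (fun _ _ => True) * (1 - n * ε) ^ n ≤
      urnKernel N n c (fun i j => i = j ∨ ((i : ℕ) < 2 ∧ (j : ℕ) < 2)) ∧
    urnKernel N n c (fun i j => i = j ∨ ((i : ℕ) < 2 ∧ (j : ℕ) < 2)) ≤
      urnKernel N 2 c (fun _ _ => True) := by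
  classical
  have hn0 : (0:ℝ) < n := by
    have : 0 < n := by omega
    exact_mod_cast this
  have hnε : (n:ℝ) * ε < 1 := by
    have := (lt_div_iff₀ hn0).1 hε'
    linarith
  have h1 : (0:ℝ) ≤ 1 - (n:ℝ) * ε := by linarith
  have h1' : 1 - (n:ℝ) * ε ≤ 1 := by nlinarith
  have hfam : ∀ ℓ, ((Finset.univ.filter fun a : Fin N => c a = ℓ).card : ℝ) ≤ ε * N := by
    intro ℓ
    rw [hc ℓ]
    have hxℓ : x ℓ ≤ ε := le_trans (hxa (Nat.zero_le ℓ)) hxε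
    have hN0 : (0:ℝ) ≤ N := Nat.cast_nonneg N
    nlinarith
  have hDpos : ∀ m : ℕ, m ≤ N → (0:ℝ) < (N.descFactorial m : ℝ) := by
    intro m hm
    have : N.descFactorial m ≠ 0 := by
      rw [Ne, Nat.descFactorial_eq_zero_iff_lt]
      omega
    exact_mod_cast Nat.pos_of_ne_zero this
  have hD2 := hDpos 2 (by omega)
  have hκ2nonneg : 0 ≤ ((stmtS N 2 c).card : ℝ) / (N.descFactorial 2 : ℝ) := by positivity
  have key : ∀ m : ℕ, 2 ≤ m → m ≤ n →
      (((stmtS N 2 c).card : ℝ) / (N.descFactorial 2 : ℝ)) * (1 - (n:ℝ)*ε)^(m-2) ≤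
        ((stmtS N m c).card : ℝ) / (N.descFactorial m : ℝ) ∧
      ((stmtS N m c).card : ℝ) / (N.descFactorial m : ℝ) ≤
        ((stmtS N 2 c).card : ℝ) / (N.descFactorial 2 : ℝ) := by
    intro m hm
    induction m, hm using Nat.le_induction with
    | base => intro _; simp
    | succ k hk IH =>
      intro hk1
      have hkn : k ≤ n := by omega
      obtain ⟨IH1, IH2⟩ := IH hkn
      have hkN : k ≤ N := le_trans hkn hN
      have hkN' : k < N := lt_of_lt_of_le (by omega : k < n) hN
      have hNk : (0:ℝ) < (N:ℝ) - k := by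
        have : (k:ℝ) < N := by exact_mod_cast hkN'
        linarith
      have hDk := hDpos k hkN
      have hDsucc : ((N.descFactorial (k+1) : ℕ) : ℝ) =
          ((N:ℝ) - k) * (N.descFactorial k : ℝ) := by
        rw [Nat.descFactorial_succ]
        push_cast [Nat.cast_sub hkN]
        ring
      have hcard := stmt_card_succ N k c hk
      have hTnonneg : (0:ℝ) ≤ ((stmtS N k c).card : ℝ) := Nat.cast_nonneg _
      have hup : ((stmtS N (k+1) c).card : ℝ) ≤ ((stmtS N k c).card : ℝ) * ((N:ℝ) - k) := by
        have hnat : (stmtS N (k+1) c).card ≤ (stmtS N k c).card * (N - k) := by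
          rw [hcard]
          calc ∑ g ∈ stmtS N k c,
                (Finset.univ.filter fun a : Fin N => ∀ i, c a ≠ c (g i)).card
              ≤ ∑ _g ∈ stmtS N k c, (N - k) :=
                Finset.sum_le_sum fun g _ => stmt_fiber_le N k c g
            _ = (stmtS N k c).card * (N - k) := by rw [Finset.sum_const, smul_eq_mul]
        calc ((stmtS N (k+1) c).card : ℝ)
            ≤ (((stmtS N k c).card * (N - k) : ℕ) : ℝ) := by exact_mod_cast hnat
          _ = ((stmtS N k c).card : ℝ) * ((N:ℝ) - k) := by
              push_cast [Nat.cast_sub hkN]; ring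
      have hlo : ((stmtS N k c).card : ℝ) * (((N:ℝ) - k) * (1 - (n:ℝ)*ε)) ≤
          ((stmtS N (k+1) c).card : ℝ) := by
        have step1 : ((stmtS N k c).card : ℝ) * ((N:ℝ) - k * (ε * N)) ≤
            ((stmtS N (k+1) c).card : ℝ) := by
          rw [hcard]
          push_cast
          calc ((stmtS N k c).card : ℝ) * ((N:ℝ) - k * (ε*N))
              = ∑ _g ∈ stmtS N k c, ((N:ℝ) - k * (ε*N)) := by
                rw [Finset.sum_const, nsmul_eq_mul]
            _ ≤ ∑ g ∈ stmtS N k c,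
                ((Finset.univ.filter fun a : Fin N => ∀ i, c a ≠ c (g i)).card : ℝ) :=
                Finset.sum_le_sum fun g _ => stmt_fiber_ge N k c ε hfam g
        refine le_trans (mul_le_mul_of_nonneg_left ?_ hTnonneg) step1
        have hkn' : (k:ℝ) ≤ n := by exact_mod_cast hkn
        have hk0 : (0:ℝ) ≤ k := Nat.cast_nonneg k
        have hN0 : (0:ℝ) ≤ N := Nat.cast_nonneg N
        nlinarith [mul_nonneg (mul_nonneg hN0 hε.le) (sub_nonneg.2 hkn'),
          mul_nonneg hk0 h1]
      constructor
      · have he : k + 1 - 2 = (k - 2) + 1 := by omega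
        rw [he, pow_succ, ← mul_assoc]
        calc (((stmtS N 2 c).card : ℝ) / (N.descFactorial 2 : ℝ)) * (1 - (n:ℝ)*ε)^(k-2)
              * (1 - (n:ℝ)*ε)
            ≤ (((stmtS N k c).card : ℝ) / (N.descFactorial k : ℝ)) * (1 - (n:ℝ)*ε) :=
              mul_le_mul_of_nonneg_right IH1 h1
          _ = (((stmtS N k c).card : ℝ) * (((N:ℝ)-k) * (1 - (n:ℝ)*ε))) /
                (((N:ℝ)-k) * (N.descFactorial k : ℝ)) := by
              field_simp
          _ ≤ ((stmtS N (k+1) c).card : ℝ) / (((N:ℝ)-k) * (N.descFactorial k : ℝ)) :=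
              (div_le_div_iff_of_pos_right (mul_pos hNk hDk)).2 hlo
          _ = ((stmtS N (k+1) c).card : ℝ) / (N.descFactorial (k+1) : ℝ) := by
              rw [hDsucc]
      · calc ((stmtS N (k+1) c).card : ℝ) / (N.descFactorial (k+1) : ℝ)
            = ((stmtS N (k+1) c).card : ℝ) / (((N:ℝ)-k) * (N.descFactorial k : ℝ)) := by
              rw [hDsucc]
          _ ≤ (((stmtS N k c).card : ℝ) * ((N:ℝ)-k)) /
                (((N:ℝ)-k) * (N.descFactorial k : ℝ)) :=
              (div_le_div_iff_of_pos_right (mul_pos hNk hDk)).2 hup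
          _ = ((stmtS N k c).card : ℝ) / (N.descFactorial k : ℝ) := by
              rw [mul_comm ((stmtS N k c).card : ℝ) ((N:ℝ)-k),
                mul_div_mul_left _ _ (ne_of_gt hNk)]
          _ ≤ ((stmtS N 2 c).card : ℝ) / (N.descFactorial 2 : ℝ) := IH2
  have hker : urnKernel N n c (fun i j => i = j ∨ ((i : ℕ) < 2 ∧ (j : ℕ) < 2)) =
      ((stmtS N n c).card : ℝ) / (N.descFactorial n : ℝ) := by
    simp only [urnKernel, stmtS, stmtQ]
    rw [Fintype.card_embedding_eq, Fintype.card_fin, Fintype.card_fin]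
    congr
  have hker2 : urnKernel N 2 c (fun _ _ => True) =
      ((stmtS N 2 c).card : ℝ) / (N.descFactorial 2 : ℝ) := by
    simp only [urnKernel, stmtS]
    rw [Fintype.card_embedding_eq, Fintype.card_fin, Fintype.card_fin]
    congr 2
    apply congrArg
    ext f
    simp only [Finset.mem_filter, Finset.mem_univ, true_and]
    have hQ2 : ∀ i j : Fin 2, stmtQ 2 i j := fun i j => Or.inr ⟨i.isLt, j.isLt⟩
    constructor
    · intro h i j
      exact ⟨fun _ => (h i j).1 trivial, fun _ => hQ2 i j⟩
    · intro h i j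
      exact ⟨fun _ => (h i j).1 (hQ2 i j), fun _ => trivial⟩
  obtain ⟨hlow, hupp⟩ := key n hn le_rfl
  rw [hker, hker2]
  refine ⟨le_trans ?_ hlow, hupp⟩
  have hpow : (1 - (n:ℝ)*ε) ^ n ≤ (1 - (n:ℝ)*ε) ^ (n - 2) :=
    pow_le_pow_of_le_one h1 h1' (by omega)
  calc (((stmtS N 2 c).card : ℝ) / (N.descFactorial 2 : ℝ)) * (1 - (n:ℝ)*ε) ^ n
      ≤ (((stmtS N 2 c).card : ℝ) / (N.descFactorial 2 : ℝ)) * (1 - (n:ℝ)*ε) ^ (n-2) :=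
        mul_le_mul_of_nonneg_left hpow hκ2nonneg
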